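/- Let p ≥ 1 be an integer, let γ be any full cycle in the symmetric group S_p (a permutation whose cycle type is the single part p), and let σ ∈ S_p be geodesic with respect to γ, i.e. |σ| + |σ⁻¹γ| = p − 1. Then 1 + e(σ) = #(σγ), where e(σ) is the number of orbits of σ of even cardinality and #(σγ) is the number of orbits (cycles, counting fixed points) of the permutation σγ. -/

import Mathlib

open scoped Classical

/-- Number of orbits (cycles, counting fixed points) of a permutation of `Fin p`. -/
def numOrbits {p : ℕ} (σ : Equiv.Perm (Fin p)) : ℕ :=
  (p - σ.cycleType.sum) + σ.cycleType.card

/-- Number of orbits of even cardinality of a permutation of `Fin p`. -/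
def numEvenOrbits {p : ℕ} (σ : Equiv.Perm (Fin p)) : ℕ :=
  (σ.cycleType.filter Even).card

/-- Length of a permutation: minimal number of transpositions, `|σ| = p - #σ`. -/
def permLength {p : ℕ} (σ : Equiv.Perm (Fin p)) : ℕ := p - numOrbits σ

/-- `σ` is geodesic with respect to the full cycle `γ`: `|σ| + |σ⁻¹γ| = p - 1`. -/
def IsGeodesic {p : ℕ} (γ σ : Equiv.Perm (Fin p)) : Prop :=
  permLength σ + permLength (σ⁻¹ * γ) = p - 1

/-- The moments `M_p(m,n) = Σ_{σ geodesic} m^{#σ} n^{e(σ)}`, with `M_0 = 1`. -/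
noncomputable def M (m n : ℝ) : ℕ → ℝ
  | 0 => 1
  | (p + 1) => ∑ σ : Equiv.Perm (Fin (p + 1)),
      if IsGeodesic (finRotate (p + 1)) σ then m ^ numOrbits σ * n ^ numEvenOrbits σ else 0

namespace NCAux
open Equiv Equiv.Perm Finset

variable {α : Type*} [Fintype α] [DecidableEq α]

/-- length of a permutation: sum of (cycle length - 1). -/
def len (π : Equiv.Perm α) : ℕ := (π.cycleType.map (fun n => n - 1)).sum

/-- number of even cycles. -/
def ecnt (π : Equiv.Perm α) : ℕ := (π.cycleType.filter Even).card

lemma len_one : len (1 : Equiv.Perm α) = 0 := by simp [len]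

lemma ecnt_one : ecnt (1 : Equiv.Perm α) = 0 := by simp [ecnt]

private lemma multiset_aux (m : Multiset ℕ) (h : ∀ x ∈ m, 1 ≤ x) :
    (m.map (fun n => n - 1)).sum + Multiset.card m = m.sum := by
  induction m using Multiset.induction with
  | empty => simp
  | cons a s ih =>
    simp only [Multiset.map_cons, Multiset.sum_cons, Multiset.card_cons]
    have ha : 1 ≤ a := h a (Multiset.mem_cons_self a s)
    have := ih (fun x hx => h x (Multiset.mem_cons_of_mem hx))
    omega

lemma len_add_card (π : Equiv.Perm α) :
    len π + Multiset.card π.cycleType = π.support.card := by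
  rw [len, ← Equiv.Perm.sum_cycleType]
  exact multiset_aux _ (fun x hx => le_of_lt (Equiv.Perm.one_lt_of_mem_cycleType hx))

lemma two_mul_card_cycleType_le (π : Equiv.Perm α) :
    2 * Multiset.card π.cycleType ≤ π.support.card := by
  rw [← Equiv.Perm.sum_cycleType]
  have := Multiset.card_nsmul_le_sum (s := π.cycleType) (a := 2)
    (fun x hx => Equiv.Perm.two_le_of_mem_cycleType hx)
  simpa [smul_eq_mul, mul_comm] using this

lemma len_disjoint_mul {f g : Equiv.Perm α} (h : Equiv.Perm.Disjoint f g) :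
    len (f * g) = len f + len g := by
  simp [len, h.cycleType_mul]

lemma ecnt_disjoint_mul {f g : Equiv.Perm α} (h : Equiv.Perm.Disjoint f g) :
    ecnt (f * g) = ecnt f + ecnt g := by
  simp [ecnt, h.cycleType_mul, Multiset.filter_add]

lemma len_isCycle {c : Equiv.Perm α} (h : c.IsCycle) : len c = c.support.card - 1 := by
  rw [len, h.cycleType]
  simp

lemma ecnt_isCycle {c : Equiv.Perm α} (h : c.IsCycle) :
    ecnt c = if Even c.support.card then 1 else 0 := by
  rw [ecnt, h.cycleType]
  simp only [Multiset.coe_singleton, Multiset.filter_singleton]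
  split_ifs <;> simp

lemma len_swap {x y : α} (h : x ≠ y) : len (Equiv.swap x y) = 1 := by
  rw [len_isCycle (Equiv.Perm.isCycle_swap h), Equiv.Perm.card_support_swap h]

lemma ecnt_swap {x y : α} (h : x ≠ y) : ecnt (Equiv.swap x y) = 1 := by
  rw [ecnt_isCycle (Equiv.Perm.isCycle_swap h), Equiv.Perm.card_support_swap h]
  simp

lemma len_eq_zero_iff {π : Equiv.Perm α} : len π = 0 ↔ π = 1 := by
  constructor
  · intro h
    have h1 := len_add_card π
    have h2 := two_mul_card_cycleType_le π
    have h3 : Multiset.card π.cycleType = 0 := by omega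
    exact Equiv.Perm.card_cycleType_eq_zero.mp h3
  · rintro rfl; exact len_one

lemma len_add_one_le_card_support {π : Equiv.Perm α} (h : π ≠ 1) :
    len π + 1 ≤ π.support.card := by
  have h1 := len_add_card π
  have h2 : 0 < Multiset.card π.cycleType := Equiv.Perm.card_cycleType_pos.mpr h
  omega


lemma swap_conj (pi : Equiv.Perm α) (x y : α) :
    pi * Equiv.swap x y * pi⁻¹ = Equiv.swap (pi x) (pi y) := by
  rw [Equiv.mul_swap_eq_swap_mul, mul_inv_cancel_right]

/-- moving a permutation across a swap, convenient associativity form. -/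
lemma conj_form (pi : Equiv.Perm α) (x y : α) (ω : Equiv.Perm α) :
    pi * (Equiv.swap x y * ω) = Equiv.swap (pi x) (pi y) * (pi * ω) := by
  rw [← mul_assoc, Equiv.mul_swap_eq_swap_mul, mul_assoc]

lemma support_del_subset (π : Equiv.Perm α) (x : α) :
    (Equiv.swap x (π x) * π).support ⊆ π.support.erase x := by
  intro y hy
  have h := Equiv.Perm.mem_support_swap_mul_imp_mem_support_ne hy
  exact Finset.mem_erase.2 ⟨h.2, h.1⟩

/-- Deleting a point from a permutation decreases length by exactly one. -/
lemma len_del {π : Equiv.Perm α} {x : α} (hx : π x ≠ x) :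
    len (Equiv.swap x (π x) * π) + 1 = len π := by
  set c := π.cycleOf x with hc
  have hccyc : c.IsCycle := Equiv.Perm.isCycle_cycleOf π hx
  have hmem : c ∈ π.cycleFactorsFinset :=
    Equiv.Perm.cycleOf_mem_cycleFactorsFinset_iff.mpr (Equiv.Perm.mem_support.2 hx)
  set r := π * c⁻¹ with hr
  have hdis : Equiv.Perm.Disjoint r c :=
    Equiv.Perm.disjoint_mul_inv_of_mem_cycleFactorsFinset hmem
  have hπ : π = r * c := by rw [hr, inv_mul_cancel_right]
  have hcx : c x = π x := π.cycleOf_apply_self x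
  have hxc : x ∈ c.support := by
    rw [Equiv.Perm.mem_support_cycleOf_iff]
    exact ⟨Equiv.Perm.SameCycle.refl π x, Equiv.Perm.mem_support.2 hx⟩
  have hcxc : c x ∈ c.support := Equiv.Perm.apply_mem_support.2 hxc
  have hfixr : ∀ z ∈ c.support, r z = z := by
    intro z hz
    rcases hdis z with h | h
    · exact h
    · exact absurd (Equiv.Perm.notMem_support.2 h) (by simpa using hz)
  have hcomm : Equiv.swap x (c x) * r = r * Equiv.swap x (c x) := by
    have hd : Equiv.Perm.Disjoint (Equiv.swap x (c x)) r := by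
      intro z
      by_cases hzx : z = x
      · right; rw [hzx]; exact hfixr x hxc
      by_cases hzc : z = c x
      · right; rw [hzc]; exact hfixr _ hcxc
      · left; exact Equiv.swap_apply_of_ne_of_ne hzx hzc
    exact hd.commute
  have hkey : Equiv.swap x (π x) * π = r * (Equiv.swap x (c x) * c) := by
    rw [← hcx, hπ, ← mul_assoc, hcomm, mul_assoc]
  have hcnum : 2 ≤ c.support.card :=
    Equiv.Perm.two_le_card_support_of_ne_one hccyc.ne_one
  have hlenπ : len π = len r + (c.support.card - 1) := by
    rw [hπ, len_disjoint_mul hdis, len_isCycle hccyc]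
  have hcx' : c x ≠ x := by rw [hcx]; exact hx
  by_cases h2 : c (c x) = x
  · -- c is a transposition
    have hcs : c = Equiv.swap x (c x) := hccyc.eq_swap_of_apply_apply_eq_self hcx' h2
    have hcs' : c = Equiv.swap x (π x) := by rw [← hcx]; exact hcs
    have : Equiv.swap x (c x) * c = 1 := by rw [hcx, hcs', Equiv.swap_mul_self]
    rw [hkey, this, mul_one]
    have hcard : c.support.card = 2 := by
      rw [hcs, Equiv.Perm.card_support_swap (Ne.symm hcx')]
    omega
  · have hc'cyc : (Equiv.swap x (c x) * c).IsCycle := hccyc.swap_mul hcx' h2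
    have hc'supp : (Equiv.swap x (c x) * c).support = c.support \ {x} :=
      Equiv.Perm.support_swap_mul_eq c x h2
    have hc'card : (Equiv.swap x (c x) * c).support.card = c.support.card - 1 := by
      rw [hc'supp, Finset.sdiff_singleton_eq_erase, Finset.card_erase_of_mem hxc]
    have hdis' : Equiv.Perm.Disjoint r (Equiv.swap x (c x) * c) := by
      intro z
      by_cases hz : z ∈ c.support
      · left; exact hfixr z hz
      · right
        have : z ∉ (Equiv.swap x (c x) * c).support := fun hmem' => hz (by
          have := hc'supp ▸ hmem'
          exact (Finset.mem_sdiff.1 this).1)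
        simpa using Equiv.Perm.notMem_support.1 this
    rw [hkey, len_disjoint_mul hdis', len_isCycle hc'cyc, hc'card, hlenπ]
    omega

/-- Inserting a fixed point into a permutation increases length by one. -/
lemma len_ins {ω : Equiv.Perm α} {z w : α} (hz : ω z = z) (hw : z ≠ w) :
    len (Equiv.swap z w * ω) = len ω + 1 := by
  have h1 : (Equiv.swap z w * ω) z = w := by
    simp [Equiv.Perm.mul_apply, hz]
  have h2 : (Equiv.swap z w * ω) z ≠ z := by rw [h1]; exact Ne.symm hw
  have := len_del h2
  rw [h1, ← mul_assoc, Equiv.swap_mul_self, one_mul] at this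
  omega


set_option linter.unusedSectionVars false

private lemma E_aux1 (π : Equiv.Perm α) (hπ1 : π ≠ 1) {x y : α} (hxy : x ≠ y)
    (hx : x ∈ π.support) (hy : y ∉ π.support)
    (hsub : ∀ z ∈ π.support, z = x ∨ z = y ∨ z = π⁻¹ x ∨ z = π⁻¹ y) :
    len (Equiv.swap x y * π) ≤ len π + 1 := by
  have hπy : π y = y := Equiv.Perm.notMem_support.1 hy
  have hπinvy : π⁻¹ y = y := by
    rw [Equiv.Perm.inv_eq_iff_eq]; exact hπy.symm
  have hsub' : π.support ⊆ {x, π⁻¹ x} := by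
    intro z hzs
    rcases hsub z hzs with h | h | h | h
    · simp [h]
    · exact absurd (h ▸ hzs) hy
    · simp [h]
    · rw [h, hπinvy] at hzs; exact absurd hzs hy
  have hs2 : π.support.card = 2 := by
    refine le_antisymm ?_ (Equiv.Perm.two_le_card_support_of_ne_one hπ1)
    refine le_trans (Finset.card_le_card hsub') ?_
    refine le_trans (Finset.card_insert_le _ _) (by simp)
  have hsub2 : (Equiv.swap x y * π).support ⊆ insert y π.support := by
    refine le_trans (Equiv.Perm.support_mul_le _ _) ?_
    rw [Equiv.Perm.support_swap hxy]
    intro w hw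
    simp only [Finset.sup_eq_union, Finset.mem_union, Finset.mem_insert,
      Finset.mem_singleton] at hw
    rcases hw with (rfl | rfl) | hw
    · exact Finset.mem_insert_of_mem hx
    · exact Finset.mem_insert_self _ _
    · exact Finset.mem_insert_of_mem hw
  have hcard3 : (Equiv.swap x y * π).support.card ≤ 3 := by
    refine le_trans (Finset.card_le_card hsub2) ?_
    refine le_trans (Finset.card_insert_le _ _) (by omega)
  by_cases h0 : Equiv.swap x y * π = 1
  · rw [h0, len_one]; omega
  · have hF := len_add_one_le_card_support h0
    have e1 := len_add_card π
    have e2 := two_mul_card_cycleType_le π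
    omega

private lemma E_auxmain : ∀ (n : ℕ) (π : Equiv.Perm α), π.support.card ≤ n →
    ∀ x y : α, x ≠ y → len (Equiv.swap x y * π) ≤ len π + 1 := by
  intro n
  induction n with
  | zero =>
    intro π hπ x y hxy
    have h0 : π.support = ∅ := Finset.card_eq_zero.1 (le_antisymm hπ (Nat.zero_le _))
    have hπ1 : π = 1 := Equiv.Perm.support_eq_empty_iff.1 h0
    subst hπ1
    rw [mul_one, len_swap hxy, len_one]
  | succ n IH =>
    intro π hπ x y hxy
    by_cases hπ1 : π = 1
    · subst hπ1; rw [mul_one, len_swap hxy, len_one]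
    by_cases hz : ∃ z ∈ π.support, z ≠ x ∧ z ≠ y ∧ π z ≠ x ∧ π z ≠ y
    · obtain ⟨z, hzs, hzx, hzy, hpzx, hpzy⟩ := hz
      have hπz : π z ≠ z := Equiv.Perm.mem_support.1 hzs
      set π₂ := Equiv.swap z (π z) * π with hπ₂
      have hπ₂z : π₂ z = z := by
        simp [hπ₂, Equiv.Perm.mul_apply, Equiv.swap_apply_right]
      have hcard : π₂.support.card ≤ n := by
        have h1 := Finset.card_le_card (support_del_subset π z)
        rw [Finset.card_erase_of_mem hzs] at h1
        have h2 : π₂.support.card ≤ π.support.card - 1 := by rw [hπ₂]; exact h1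
        have h3 : 0 < π.support.card := Finset.card_pos.mpr ⟨z, hzs⟩
        omega
      have hlen2 : len π₂ + 1 = len π := len_del hπz
      have hfix : (Equiv.swap x y * π₂) z = z := by
        simp [Equiv.Perm.mul_apply, hπ₂z, Equiv.swap_apply_of_ne_of_ne hzx hzy]
      have hcomm : Equiv.swap x y * Equiv.swap z (π z) = Equiv.swap z (π z) * Equiv.swap x y := by
        have hd : Equiv.Perm.Disjoint (Equiv.swap x y) (Equiv.swap z (π z)) := by
          intro w
          by_cases hwx : w = x
          · right; rw [hwx]; exact Equiv.swap_apply_of_ne_of_ne (Ne.symm hzx) (Ne.symm hpzx)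
          by_cases hwy : w = y
          · right; rw [hwy]; exact Equiv.swap_apply_of_ne_of_ne (Ne.symm hzy) (Ne.symm hpzy)
          · left; exact Equiv.swap_apply_of_ne_of_ne hwx hwy
        exact hd.commute
      have hkey : Equiv.swap z (π z) * (Equiv.swap x y * π₂) = Equiv.swap x y * π := by
        rw [hπ₂, ← mul_assoc, ← hcomm, mul_assoc, Equiv.swap_mul_self_mul]
      rw [← hkey, len_ins hfix (Ne.symm hπz)]
      have := IH π₂ hcard x y hxy
      omega
    · push_neg at hz
      have hsub : ∀ z ∈ π.support, z = x ∨ z = y ∨ z = π⁻¹ x ∨ z = π⁻¹ y := by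
        intro z hzs
        by_cases h1 : z = x
        · exact Or.inl h1
        by_cases h2 : z = y
        · exact Or.inr (Or.inl h2)
        by_cases h3 : π z = x
        · refine Or.inr (Or.inr (Or.inl ?_))
          rw [← h3]; simp
        · refine Or.inr (Or.inr (Or.inr ?_))
          rw [← hz z hzs h1 h2 h3]; simp
      by_cases hx : x ∈ π.support <;> by_cases hy : y ∈ π.support
      · -- both in support
        have hsub2 : (Equiv.swap x y * π).support ⊆ π.support := by
          refine le_trans (Equiv.Perm.support_mul_le _ _) ?_
          rw [Equiv.Perm.support_swap hxy]
          intro w hw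
          simp only [Finset.sup_eq_union, Finset.mem_union, Finset.mem_insert,
            Finset.mem_singleton] at hw
          rcases hw with (rfl | rfl) | hw
          · exact hx
          · exact hy
          · exact hw
        have hsupp4 : π.support.card ≤ 4 := by
          have hss : π.support ⊆ {x, y, π⁻¹ x, π⁻¹ y} := by
            intro z hzs; rcases hsub z hzs with h | h | h | h <;> simp [h]
          refine le_trans (Finset.card_le_card hss) ?_
          refine le_trans (Finset.card_insert_le _ _) ?_
          refine Nat.succ_le_succ ?_
          refine le_trans (Finset.card_insert_le _ _) ?_
          refine Nat.succ_le_succ ?_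
          refine le_trans (Finset.card_insert_le _ _) (by simp)
        by_cases h0 : Equiv.swap x y * π = 1
        · rw [h0, len_one]; omega
        · have hF := len_add_one_le_card_support h0
          have hF2 := Finset.card_le_card hsub2
          have e1 := len_add_card π
          have e2 := two_mul_card_cycleType_le π
          omega
      · exact E_aux1 π hπ1 hxy hx hy hsub
      · rw [Equiv.swap_comm]
        refine E_aux1 π hπ1 (Ne.symm hxy) hy hx ?_
        intro z hzs; rcases hsub z hzs with h | h | h | h <;> tauto
      · -- neither
        have hd : Equiv.Perm.Disjoint (Equiv.swap x y) π := by
          intro w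
          by_cases hwx : w = x
          · right; rw [hwx]; exact Equiv.Perm.notMem_support.1 hx
          by_cases hwy : w = y
          · right; rw [hwy]; exact Equiv.Perm.notMem_support.1 hy
          · left; exact Equiv.swap_apply_of_ne_of_ne hwx hwy
        rw [len_disjoint_mul hd, len_swap hxy]
        omega

/-- Multiplying by a transposition changes length by at most one. -/
lemma len_swap_mul_le {x y : α} (hxy : x ≠ y) (π : Equiv.Perm α) :
    len (Equiv.swap x y * π) ≤ len π + 1 :=
  E_auxmain π.support.card π le_rfl x y hxy

/-- Triangle inequality for permutation length. -/
lemma len_mul_le (f g : Equiv.Perm α) : len (f * g) ≤ len f + len g := by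
  suffices h : ∀ (n : ℕ) (f : Equiv.Perm α), len f ≤ n →
      ∀ g, len (f * g) ≤ len f + len g by
    exact h (len f) f le_rfl g
  intro n
  induction n with
  | zero =>
    intro f hf g
    have : f = 1 := len_eq_zero_iff.1 (le_antisymm hf (Nat.zero_le _))
    subst this; simp
  | succ n IH =>
    intro f hf g
    by_cases hf1 : f = 1
    · subst hf1; simp
    · have hsupp : f.support.Nonempty := by
        rw [← Finset.card_pos]
        have := Equiv.Perm.two_le_card_support_of_ne_one hf1
        omega
      obtain ⟨x, hxs⟩ := hsupp
      have hfx : f x ≠ x := Equiv.Perm.mem_support.1 hxs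
      set f₂ := Equiv.swap x (f x) * f with hf₂
      have hlen : len f₂ + 1 = len f := len_del hfx
      have hkey : f * g = Equiv.swap x (f x) * (f₂ * g) := by
        rw [hf₂, mul_assoc, ← mul_assoc (Equiv.swap x (f x)), Equiv.swap_mul_self, one_mul]
      rw [hkey]
      have h1 := len_swap_mul_le (x := x) (y := f x) (Ne.symm hfx) (f₂ * g)
      have h2 := IH f₂ (by omega) g
      omega


private lemma swap_word_aux {a b c r : α} (hba : b ≠ a) (hca : c ≠ a) (hcb : c ≠ b)
    (hrb : r ≠ b) (hrc : r ≠ c) (P : Equiv.Perm α) :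
    Equiv.swap b c * (Equiv.swap a b * (Equiv.swap c r * (Equiv.swap b c * P))) =
      Equiv.swap b (Equiv.swap a c r) * (Equiv.swap a c * P) := by
  have hmain : Equiv.swap b c * (Equiv.swap a b * (Equiv.swap c r * Equiv.swap b c)) =
      Equiv.swap b (Equiv.swap a c r) * Equiv.swap a c := by
    by_cases hra : r = a
    · rw [hra, Equiv.swap_apply_left]
      ext z
      simp only [Equiv.Perm.mul_apply]
      by_cases h1 : z = a
      · subst h1
        simp [Equiv.swap_apply_def, hba, hca, hcb, Ne.symm hba, Ne.symm hca, Ne.symm hcb]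
      by_cases h2 : z = b
      · subst h2
        simp [Equiv.swap_apply_def, hba, hca, hcb, Ne.symm hba, Ne.symm hca, Ne.symm hcb]
      by_cases h3 : z = c
      · subst h3
        simp [Equiv.swap_apply_def, hba, hca, hcb, Ne.symm hba, Ne.symm hca, Ne.symm hcb]
      · simp [Equiv.swap_apply_def, hba, hca, hcb, Ne.symm hba, Ne.symm hca, Ne.symm hcb,
          h1, h2, h3]
    · rw [Equiv.swap_apply_of_ne_of_ne hra hrc]
      ext z
      simp only [Equiv.Perm.mul_apply]
      by_cases h1 : z = a
      · subst h1
        simp [Equiv.swap_apply_def, hba, hca, hcb, hrb, hrc, hra, Ne.symm hba, Ne.symm hca,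
          Ne.symm hcb, Ne.symm hrb, Ne.symm hrc, Ne.symm hra]
      by_cases h2 : z = b
      · subst h2
        simp [Equiv.swap_apply_def, hba, hca, hcb, hrb, hrc, hra, Ne.symm hba, Ne.symm hca,
          Ne.symm hcb, Ne.symm hrb, Ne.symm hrc, Ne.symm hra]
      by_cases h3 : z = c
      · subst h3
        simp [Equiv.swap_apply_def, hba, hca, hcb, hrb, hrc, hra, Ne.symm hba, Ne.symm hca,
          Ne.symm hcb, Ne.symm hrb, Ne.symm hrc, Ne.symm hra]
      by_cases h4 : z = r
      · subst h4
        simp [Equiv.swap_apply_def, hba, hca, hcb, hrb, hrc, hra, Ne.symm hba, Ne.symm hca,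
          Ne.symm hcb, Ne.symm hrb, Ne.symm hrc, Ne.symm hra]
      · simp [Equiv.swap_apply_def, h1, h2, h3, h4]
  calc Equiv.swap b c * (Equiv.swap a b * (Equiv.swap c r * (Equiv.swap b c * P)))
      = (Equiv.swap b c * (Equiv.swap a b * (Equiv.swap c r * Equiv.swap b c))) * P := by
        simp only [mul_assoc]
    _ = _ := by rw [hmain, mul_assoc]

theorem mainGL : ∀ (n : ℕ) (S : Finset α) (γ σ : Equiv.Perm α), S.card = n →
    ((γ = 1 ∧ S.card ≤ 1) ∨ (γ.IsCycle ∧ γ.support = S)) →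
    σ.support ⊆ S →
    len σ + len (σ⁻¹ * γ) + 1 = S.card →
    1 + ecnt σ + len (σ * γ) = S.card := by
  intro n
  induction n using Nat.strong_induction_on with
  | _ n IH =>
  intro S γ σ hn hγ hσS hgeo
  by_cases hσ1 : σ = 1
  · subst hσ1
    simp only [ecnt_one, len_one, inv_one, one_mul] at *
    omega
  -- σ ≠ 1
  have hσsupp2 : 2 ≤ σ.support.card := Equiv.Perm.two_le_card_support_of_ne_one hσ1
  have hS2 : 2 ≤ S.card := le_trans hσsupp2 (Finset.card_le_card hσS)
  have hγc : γ.IsCycle ∧ γ.support = S := by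
    rcases hγ with ⟨_, h⟩ | h
    · omega
    · exact h
  obtain ⟨hγcyc, hγsupp⟩ := hγc
  -- dichotomy : σ has a fixed point in S, or σ and γ agree somewhere on S
  have hdich : (∃ x ∈ S, σ x = x) ∨ (∃ a ∈ S, σ a = γ a) := by
    by_contra hcon
    push_neg at hcon
    obtain ⟨h1, h2⟩ := hcon
    have hsuppσ : σ.support = S :=
      subset_antisymm hσS (fun z hz => Equiv.Perm.mem_support.2 (h1 z hz))
    have hsuppτ : (σ⁻¹ * γ).support = S := by
      apply subset_antisymm
      · intro z hz
        by_contra hzS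
        have hσz : σ z = z := by
          have : z ∉ σ.support := fun h => hzS (hσS h)
          exact Equiv.Perm.notMem_support.1 this
        have hγz : γ z = z := by
          have : z ∉ γ.support := by rw [hγsupp]; exact hzS
          exact Equiv.Perm.notMem_support.1 this
        have : (σ⁻¹ * γ) z = z := by
          simp [Equiv.Perm.mul_apply, hγz, Equiv.Perm.inv_eq_iff_eq, Equiv.symm_apply_eq, hσz]
        exact (Equiv.Perm.mem_support.1 hz) this
      · intro z hz
        refine Equiv.Perm.mem_support.2 (fun hτz => h2 z hz ?_)
        have : γ z = σ z := by
          have := congrArg σ hτz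
          simpa [Equiv.Perm.mul_apply] using this
        exact this.symm
    have e1 := len_add_card σ
    have e2 := len_add_card (σ⁻¹ * γ)
    have d1 := two_mul_card_cycleType_le σ
    have d2 := two_mul_card_cycleType_le (σ⁻¹ * γ)
    rw [hsuppσ] at e1 d1
    rw [hsuppτ] at e2 d2
    omega
  rcases hdich with ⟨x, hxS, hσx⟩ | ⟨a, haS, hσa⟩
  · -- Case A : σ has a fixed point x ∈ S
    have hγx : γ x ≠ x := Equiv.Perm.mem_support.1 (hγsupp ▸ hxS)
    have hxsupp : x ∉ σ.support := Equiv.Perm.notMem_support.2 hσx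
    have hσS' : σ.support ⊆ S.erase x :=
      fun z hz => Finset.mem_erase.2 ⟨fun h => hxsupp (h ▸ hz), hσS hz⟩
    have hS3 : 3 ≤ S.card := by
      have h1 := Finset.card_le_card hσS'
      rw [Finset.card_erase_of_mem hxS] at h1
      omega
    have hγγx : γ (γ x) ≠ x := by
      intro h
      have heq := hγcyc.eq_swap_of_apply_apply_eq_self hγx h
      have hc2 : S.card = 2 := by
        rw [← hγsupp, heq, Equiv.Perm.card_support_swap (Ne.symm hγx)]
      omega
    set γ₁ := Equiv.swap x (γ x) * γ with hγ₁def
    have hγ₁cyc : γ₁.IsCycle := hγcyc.swap_mul hγx hγγx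
    have hγ₁supp : γ₁.support = S.erase x := by
      rw [hγ₁def, Equiv.Perm.support_swap_mul_eq γ x hγγx, hγsupp,
        Finset.sdiff_singleton_eq_erase]
    have hσinvx : σ⁻¹ x = x := by rw [Equiv.Perm.inv_eq_iff_eq]; exact hσx.symm
    have hτx : (σ⁻¹ * γ) x ≠ x := by
      simp only [Equiv.Perm.mul_apply]
      intro h
      apply hγx
      have := congrArg σ h
      rw [← Equiv.Perm.mul_apply, mul_inv_cancel, Equiv.Perm.one_apply, hσx] at this
      exact this
    have hτ1 : σ⁻¹ * γ₁ = Equiv.swap x ((σ⁻¹ * γ) x) * (σ⁻¹ * γ) := by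
      rw [hγ₁def, conj_form, hσinvx]
      rfl
    have hτlen : len (σ⁻¹ * γ₁) + 1 = len (σ⁻¹ * γ) := by
      rw [hτ1]; exact len_del hτx
    have hρx : (σ * γ) x ≠ x := by
      simp only [Equiv.Perm.mul_apply]
      intro h
      apply hγx
      have h2 : γ x = σ⁻¹ x := Equiv.Perm.eq_inv_iff_eq.2 h
      rw [h2, hσinvx]
    have hρ1 : σ * γ₁ = Equiv.swap x ((σ * γ) x) * (σ * γ) := by
      rw [hγ₁def, conj_form, hσx]
      rfl
    have hρlen : len (σ * γ₁) + 1 = len (σ * γ) := by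
      rw [hρ1]; exact len_del hρx
    have hcard' : (S.erase x).card = S.card - 1 := Finset.card_erase_of_mem hxS
    have hIH := IH (n - 1) (by omega) (S.erase x) γ₁ σ (by omega)
      (Or.inr ⟨hγ₁cyc, hγ₁supp⟩) hσS' (by omega)
    omega
  · -- Case B : σ a = γ a for some a ∈ S
    have hγa : γ a ≠ a := Equiv.Perm.mem_support.1 (hγsupp ▸ haS)
    set b := γ a with hbdef
    have hba : b ≠ a := hγa
    have haσ : a ∈ σ.support := Equiv.Perm.mem_support.2 (by rw [hσa]; exact hba)
    have hbσ : b ∈ σ.support := by rw [← hσa]; exact Equiv.Perm.apply_mem_support.2 haσ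
    have hbS : b ∈ S := hσS hbσ
    have hσb : σ b ≠ b := Equiv.Perm.mem_support.1 hbσ
    by_cases hS2' : S.card = 2
    · -- s = 2 : σ = γ = swap a b
      have hmemS : ∀ z ∈ S, z = a ∨ z = b := by
        have habS : ({a, b} : Finset α) ⊆ S := by
          intro z hz
          simp only [Finset.mem_insert, Finset.mem_singleton] at hz
          rcases hz with rfl | rfl
          exacts [haS, hbS]
        have hScard : ({a, b} : Finset α).card = 2 := by
          rw [Finset.card_insert_of_notMem (Finset.notMem_singleton.2 (Ne.symm hba)),
            Finset.card_singleton]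
        have hSeq : ({a, b} : Finset α) = S :=
          Finset.eq_of_subset_of_card_le habS (by omega)
        intro z hz
        rw [← hSeq] at hz
        simpa using hz
      have hσba : σ b = a := by
        have h1 : σ b ∈ S := hσS (Equiv.Perm.apply_mem_support.2 hbσ)
        rcases hmemS _ h1 with h | h
        · exact h
        · exact absurd h hσb
      have hbγsupp : b ∈ γ.support := hγsupp.symm ▸ hbS
      have hγba : γ b = a := by
        have h1 : γ b ∈ S := hγsupp ▸ Equiv.Perm.apply_mem_support.2 hbγsupp
        rcases hmemS _ h1 with h | h
        · exact h
        · exact absurd h (Equiv.Perm.mem_support.1 hbγsupp)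
      have hσeq : σ = Equiv.swap a b := by
        ext z
        by_cases hza : z = a
        · rw [hza, hσa, Equiv.swap_apply_left]
        by_cases hzb : z = b
        · rw [hzb, hσba, Equiv.swap_apply_right]
        · rw [Equiv.swap_apply_of_ne_of_ne hza hzb]
          by_contra hne
          have : z ∈ S := hσS (Equiv.Perm.mem_support.2 hne)
          rcases hmemS _ this with h | h
          exacts [hza h, hzb h]
      have hγeq : γ = Equiv.swap a b := by
        ext z
        by_cases hza : z = a
        · rw [hza, ← hbdef, Equiv.swap_apply_left]
        by_cases hzb : z = b
        · rw [hzb, hγba, Equiv.swap_apply_right]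
        · rw [Equiv.swap_apply_of_ne_of_ne hza hzb]
          by_contra hne
          have : z ∈ S := hγsupp ▸ Equiv.Perm.mem_support.2 hne
          rcases hmemS _ this with h | h
          exacts [hza h, hzb h]
      rw [hσeq, hγeq, Equiv.swap_mul_self, len_one, ecnt_swap (Ne.symm hba)]
      omega
    · -- s ≥ 3
      have hS3 : 3 ≤ S.card := by omega
      have hbγsupp : b ∈ γ.support := hγsupp.symm ▸ hbS
      have hγb : γ b ≠ b := Equiv.Perm.mem_support.1 hbγsupp
      set u := γ b with hudef
      have hub : u ≠ b := hγb
      have hua : u ≠ a := by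
        intro h
        have h2 : γ b = a := by rw [← hudef, h]
        have heq := hγcyc.eq_swap_of_apply_apply_eq_self hγa (by rw [← hbdef, h2])
        have hc2 : S.card = 2 := by
          have h3 : γ.support.card = 2 := by
            rw [heq, Equiv.Perm.card_support_swap (Ne.symm hγa)]
          rw [hγsupp] at h3
          exact h3
        omega
      have huS : u ∈ S := hγsupp ▸ Equiv.Perm.apply_mem_support.2 hbγsupp
      set γ₁ := Equiv.swap a b * γ with hγ₁def
      have hγγa : γ (γ a) ≠ a := by rw [← hbdef, ← hudef]; exact hua
      have hγ₁cyc : γ₁.IsCycle := by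
        have := hγcyc.swap_mul hγa hγγa
        rwa [← hbdef] at this
      have hγ₁supp : γ₁.support = S.erase a := by
        have h1 := Equiv.Perm.support_swap_mul_eq γ a hγγa
        rw [← hbdef] at h1
        rw [hγ₁def, h1, hγsupp, Finset.sdiff_singleton_eq_erase]
      have hγ₁b : γ₁ b = u := by
        rw [hγ₁def]
        simp only [Equiv.Perm.mul_apply]
        rw [← hudef]
        exact Equiv.swap_apply_of_ne_of_ne hua hub
      set γ' := Equiv.swap b u * γ₁ with hγ'def
      have hcard1 : (S.erase a).card = S.card - 1 := Finset.card_erase_of_mem haS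
      have hcard2 : ((S.erase a).erase b).card = (S.erase a).card - 1 :=
        Finset.card_erase_of_mem (Finset.mem_erase.2 ⟨hba, hbS⟩)
      have hγ'alt : (γ' = 1 ∧ S.card = 3) ∨ (γ'.IsCycle ∧ γ'.support = (S.erase a).erase b) := by
        by_cases hs3 : S.card = 3
        · left
          refine ⟨?_, hs3⟩
          have habu : ({a, b, u} : Finset α) ⊆ S := by
            intro z hz
            simp only [Finset.mem_insert, Finset.mem_singleton] at hz
            rcases hz with rfl | rfl | rfl
            exacts [haS, hbS, huS]
          have hcard3 : ({a, b, u} : Finset α).card = 3 := by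
            rw [Finset.card_insert_of_notMem (by
              simp only [Finset.mem_insert, Finset.mem_singleton]
              push_neg
              exact ⟨Ne.symm hba, Ne.symm hua⟩),
              Finset.card_insert_of_notMem (Finset.notMem_singleton.2 (Ne.symm hub)),
              Finset.card_singleton]
          have hSeq : ({a, b, u} : Finset α) = S :=
            Finset.eq_of_subset_of_card_le habu (by omega)
          have huγsupp : u ∈ γ.support := hγsupp.symm ▸ huS
          have hγu : γ u = a := by
            have h1 : γ u ∈ S := hγsupp ▸ Equiv.Perm.apply_mem_support.2 huγsupp
            have h2 : γ u ≠ u := Equiv.Perm.mem_support.1 huγsupp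
            have h3 : γ u ≠ b := by
              rw [hbdef]
              intro h
              exact hua (γ.injective h)
            rw [← hSeq] at h1
            simp only [Finset.mem_insert, Finset.mem_singleton] at h1
            rcases h1 with h | h | h
            · exact h
            · exact absurd h h3
            · exact absurd h h2
          have hγ₁u : γ₁ u = b := by
            rw [hγ₁def]
            simp only [Equiv.Perm.mul_apply]
            rw [hγu, Equiv.swap_apply_left]
          have hγ₁b' : γ₁ b ≠ b := by rw [hγ₁b]; exact hub
          have heq := hγ₁cyc.eq_swap_of_apply_apply_eq_self hγ₁b' (by rw [hγ₁b, hγ₁u])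
          rw [hγ₁b] at heq
          rw [hγ'def, heq, Equiv.swap_mul_self]
        · right
          have hγ₁γ₁b : γ₁ (γ₁ b) ≠ b := by
            intro h
            have hγ₁b' : γ₁ b ≠ b := by rw [hγ₁b]; exact hub
            have heq := hγ₁cyc.eq_swap_of_apply_apply_eq_self hγ₁b' h
            have hcard : γ₁.support.card = 2 := by
              rw [heq, Equiv.Perm.card_support_swap (Ne.symm hγ₁b')]
            rw [hγ₁supp] at hcard
            omega
          have hγ'cyc : γ'.IsCycle := by
            have := hγ₁cyc.swap_mul (by rw [hγ₁b]; exact hub) hγ₁γ₁b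
            rwa [hγ₁b] at this
          have hγ'supp : γ'.support = (S.erase a).erase b := by
            have h1 := Equiv.Perm.support_swap_mul_eq γ₁ b hγ₁γ₁b
            rw [hγ₁b] at h1
            rw [hγ'def, h1, hγ₁supp, Finset.sdiff_singleton_eq_erase]
          exact ⟨hγ'cyc, hγ'supp⟩
      have hγ'len : len γ' + 3 = S.card := by
        rcases hγ'alt with ⟨h1, h3⟩ | ⟨hc, hs⟩
        · rw [h1, len_one]; omega
        · rw [len_isCycle hc, hs]; omega
      have hγ'hyp : (γ' = 1 ∧ ((S.erase a).erase b).card ≤ 1) ∨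
          (γ'.IsCycle ∧ γ'.support = (S.erase a).erase b) := by
        rcases hγ'alt with ⟨h1, h3⟩ | h
        · left; exact ⟨h1, by omega⟩
        · right; exact h
      by_cases hσba : σ b = a
      · -- B2 : {a,b} is a 2-cycle of σ
        set σ₂ := Equiv.swap a b * σ with hσ₂def
        have hσ₂a : σ₂ a = a := by
          rw [hσ₂def]; simp only [Equiv.Perm.mul_apply]
          rw [hσa, Equiv.swap_apply_right]
        have hσ₂b : σ₂ b = b := by
          rw [hσ₂def]; simp only [Equiv.Perm.mul_apply]
          rw [hσba, Equiv.swap_apply_left]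
        have hσ₂z : ∀ z, z ≠ a → z ≠ b → σ₂ z = σ z := by
          intro z hza hzb
          rw [hσ₂def]; simp only [Equiv.Perm.mul_apply]
          apply Equiv.swap_apply_of_ne_of_ne
          · intro h; exact hzb (σ.injective (h.trans hσba.symm))
          · intro h; exact hza (σ.injective (h.trans hσa.symm))
        have hdisj : Equiv.Perm.Disjoint (Equiv.swap a b) σ₂ := by
          intro z
          by_cases hza : z = a
          · right; rw [hza]; exact hσ₂a
          by_cases hzb : z = b
          · right; rw [hzb]; exact hσ₂b
          · left; exact Equiv.swap_apply_of_ne_of_ne hza hzb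
        have hσdec : σ = Equiv.swap a b * σ₂ := by
          rw [hσ₂def, ← mul_assoc, Equiv.swap_mul_self, one_mul]
        have hlenσ : len σ = 1 + len σ₂ := by
          conv_lhs => rw [hσdec]
          rw [len_disjoint_mul hdisj, len_swap (Ne.symm hba)]
        have hecσ : ecnt σ = 1 + ecnt σ₂ := by
          conv_lhs => rw [hσdec]
          rw [ecnt_disjoint_mul hdisj, ecnt_swap (Ne.symm hba)]
        have hσ₂supp : σ₂.support ⊆ (S.erase a).erase b := by
          intro z hz
          have hza : z ≠ a := by
            intro h; rw [h] at hz; exact (Equiv.Perm.mem_support.1 hz) hσ₂a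
          have hzb : z ≠ b := by
            intro h; rw [h] at hz; exact (Equiv.Perm.mem_support.1 hz) hσ₂b
          have hzσ : z ∈ σ.support := by
            rw [Equiv.Perm.mem_support] at hz ⊢
            rw [hσ₂z z hza hzb] at hz
            exact hz
          exact Finset.mem_erase.2 ⟨hzb, Finset.mem_erase.2 ⟨hza, hσS hzσ⟩⟩
        have hσinva : σ⁻¹ a = b := by
          rw [Equiv.Perm.inv_eq_iff_eq]; exact hσba.symm
        have hτb : (σ⁻¹ * γ) b ≠ b := by
          simp only [Equiv.Perm.mul_apply]
          rw [← hudef]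
          intro h
          apply hua
          have h2 : u = σ b := Equiv.Perm.inv_eq_iff_eq.1 h
          rw [h2, hσba]
        have hτ'eq : σ₂⁻¹ * γ' = Equiv.swap b ((σ⁻¹ * γ) b) * (σ⁻¹ * γ) := by
          have hval : (σ⁻¹ * γ) b = σ⁻¹ u := by
            simp only [Equiv.Perm.mul_apply, hudef]
          rw [hσ₂def, hγ'def, hγ₁def, mul_inv_rev, Equiv.swap_inv, mul_assoc]
          rw [conj_form (Equiv.swap a b) b u, Equiv.swap_apply_right,
            Equiv.swap_apply_of_ne_of_ne hua hub, Equiv.swap_mul_self_mul,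
            conj_form σ⁻¹ a u, hσinva, hval]
        have hτ'len : len (σ₂⁻¹ * γ') + 1 = len (σ⁻¹ * γ) := by
          rw [hτ'eq]; exact len_del hτb
        have hσua : σ u ≠ a := fun h => hub (σ.injective (h.trans hσba.symm))
        have hσub : σ u ≠ b := fun h => hua (σ.injective (h.trans hσa.symm))
        have hρb : (σ * γ) b ≠ b := by
          simp only [Equiv.Perm.mul_apply]
          rw [← hudef]
          intro h
          apply hua
          have h2 : u = σ⁻¹ b := Equiv.Perm.eq_inv_iff_eq.2 h
          have h3 : σ⁻¹ b = a := by rw [Equiv.Perm.inv_eq_iff_eq]; exact hσa.symm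
          rw [h2, h3]
        have hρ'eq : σ₂ * γ' = Equiv.swap b ((σ * γ) b) * (σ * γ) := by
          have hval : (σ * γ) b = σ u := by
            simp only [Equiv.Perm.mul_apply, hudef]
          rw [hσ₂def, hγ'def, hγ₁def, mul_assoc]
          rw [conj_form σ b u, conj_form σ a b, hσa, hσba, Equiv.swap_comm b a,
            conj_form (Equiv.swap a b) a (σ u), Equiv.swap_apply_left,
            Equiv.swap_apply_of_ne_of_ne hσua hσub, Equiv.swap_mul_self_mul, hval]
        have hρ'len : len (σ₂ * γ') + 1 = len (σ * γ) := by
          rw [hρ'eq]; exact len_del hρb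
        have hIH := IH (n - 2) (by omega) ((S.erase a).erase b) γ' σ₂ (by omega)
          hγ'hyp hσ₂supp (by omega)
        omega
      · -- B3 : the σ-cycle through a has length ≥ 3
        set c0 := σ b with hc0def
        have hc0a : c0 ≠ a := hσba
        have hc0b : c0 ≠ b := hσb
        set σ1 := Equiv.swap a b * σ with hσ1def
        have hσane : σ a ≠ a := by rw [hσa]; exact hba
        have hσ1b : σ1 b = c0 := by
          rw [hσ1def]; simp only [Equiv.Perm.mul_apply]
          rw [← hc0def]
          exact Equiv.swap_apply_of_ne_of_ne hc0a hc0b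
        have hlenσ1 : len σ1 + 1 = len σ := by
          have h := len_del (π := σ) (x := a) hσane
          rw [hσa, ← hσ1def] at h
          exact h
        set σ' := Equiv.swap b c0 * σ1 with hσ'def
        have hlenσ' : len σ' + 1 = len σ1 := by
          have h := len_del (π := σ1) (x := b) (by rw [hσ1b]; exact hc0b)
          rw [hσ1b, ← hσ'def] at h
          exact h
        have hσ'supp : σ'.support ⊆ (S.erase a).erase b := by
          have h1 : σ1.support ⊆ σ.support.erase a := by
            have h := support_del_subset σ a
            rw [hσa, ← hσ1def] at h
            exact h
          have h2 : σ'.support ⊆ σ1.support.erase b := by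
            have h := support_del_subset σ1 b
            rw [hσ1b, ← hσ'def] at h
            exact h
          intro z hz
          have hz2 := h2 hz
          have hzb := (Finset.mem_erase.1 hz2).1
          have hz1 := h1 (Finset.mem_erase.1 hz2).2
          have hza := (Finset.mem_erase.1 hz1).1
          exact Finset.mem_erase.2 ⟨hzb, Finset.mem_erase.2 ⟨hza, hσS (Finset.mem_erase.1 hz1).2⟩⟩
        -- the even-cycle count is unchanged
        set cc := σ.cycleOf a with hccdef
        have hccyc : cc.IsCycle := Equiv.Perm.isCycle_cycleOf σ hσane
        have hccmem : cc ∈ σ.cycleFactorsFinset :=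
          Equiv.Perm.cycleOf_mem_cycleFactorsFinset_iff.mpr haσ
        set r := σ * cc⁻¹ with hrdef
        have hdisjr : Equiv.Perm.Disjoint r cc :=
          Equiv.Perm.disjoint_mul_inv_of_mem_cycleFactorsFinset hccmem
        have hσdec : σ = r * cc := by rw [hrdef, inv_mul_cancel_right]
        have hcca : cc a = b := by
          rw [hccdef, Equiv.Perm.cycleOf_apply_self]; exact hσa
        have hsc : σ.SameCycle a b := by
          have h := (Equiv.Perm.sameCycle_apply_right (f := σ) (x := a) (y := a)).mpr
            (Equiv.Perm.SameCycle.refl σ a)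
          rw [hσa] at h
          exact h
        have hccb : cc b = c0 := by
          rw [hccdef, Equiv.Perm.cycleOf_apply, if_pos hsc]
        have hscc0 : σ.SameCycle a c0 := by
          have h := (Equiv.Perm.sameCycle_apply_right (f := σ) (x := a) (y := b)).mpr hsc
          rw [← hc0def] at h
          exact h
        have hc0σ : c0 ∈ σ.support := by
          rw [hc0def]; exact Equiv.Perm.apply_mem_support.2 hbσ
        have hmemcc : ∀ z, σ.SameCycle a z → z ∈ cc.support := by
          intro z h1
          rw [hccdef]
          exact Equiv.Perm.mem_support_cycleOf_iff.2 ⟨h1, haσ⟩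
        have hacc : a ∈ cc.support := hmemcc a (Equiv.Perm.SameCycle.refl σ a)
        have hbcc : b ∈ cc.support := hmemcc b hsc
        have hc0cc : c0 ∈ cc.support := hmemcc c0 hscc0
        have hfixr : ∀ z ∈ cc.support, r z = z := by
          intro z hz
          rcases hdisjr z with h | h
          · exact h
          · exact absurd (Equiv.Perm.notMem_support.2 h) (by simpa using hz)
        have hcommab : Equiv.swap a b * r = r * Equiv.swap a b := by
          have hd : Equiv.Perm.Disjoint (Equiv.swap a b) r := by
            intro z
            by_cases hza : z = a
            · right; rw [hza]; exact hfixr a hacc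
            by_cases hzb : z = b
            · right; rw [hzb]; exact hfixr b hbcc
            · left; exact Equiv.swap_apply_of_ne_of_ne hza hzb
          exact hd.commute
        have hcommbc : Equiv.swap b c0 * r = r * Equiv.swap b c0 := by
          have hd : Equiv.Perm.Disjoint (Equiv.swap b c0) r := by
            intro z
            by_cases hzb : z = b
            · right; rw [hzb]; exact hfixr b hbcc
            by_cases hzc : z = c0
            · right; rw [hzc]; exact hfixr c0 hc0cc
            · left; exact Equiv.swap_apply_of_ne_of_ne hzb hzc
          exact hd.commute
        set c1 := Equiv.swap a b * cc with hc1def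
        have hc1b : c1 b = c0 := by
          rw [hc1def]; simp only [Equiv.Perm.mul_apply]
          rw [hccb]
          exact Equiv.swap_apply_of_ne_of_ne hc0a hc0b
        set c2 := Equiv.swap b c0 * c1 with hc2def
        have hσ'dec : σ' = r * c2 := by
          rw [hσ'def, hσ1def, hc2def, hc1def]
          conv_lhs => rw [hσdec]
          rw [← mul_assoc (Equiv.swap a b) r cc, hcommab, mul_assoc r (Equiv.swap a b) cc,
            ← mul_assoc (Equiv.swap b c0) r _, hcommbc, mul_assoc]
        have hccane : cc a ≠ a := by rw [hcca]; exact hba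
        have hccccane : cc (cc a) ≠ a := by rw [hcca, hccb]; exact hc0a
        have hc1cyc : c1.IsCycle := by
          have h := hccyc.swap_mul hccane hccccane
          rw [hcca, ← hc1def] at h
          exact h
        have hc1supp : c1.support = cc.support \ {a} := by
          have h := Equiv.Perm.support_swap_mul_eq cc a hccccane
          rw [hcca, ← hc1def] at h
          exact h
        have hc1bne : c1 b ≠ b := by rw [hc1b]; exact hc0b
        have hc1card : c1.support.card = cc.support.card - 1 := by
          rw [hc1supp, Finset.sdiff_singleton_eq_erase, Finset.card_erase_of_mem hacc]
        have hecntc2 : ecnt c2 = ecnt cc ∧ c2.support ⊆ cc.support := by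
          by_cases hc1c0 : c1 c0 = b
          · have heq := hc1cyc.eq_swap_of_apply_apply_eq_self hc1bne (by rw [hc1b]; exact hc1c0)
            rw [hc1b] at heq
            have hc21 : c2 = 1 := by rw [hc2def, heq, Equiv.swap_mul_self]
            have hc1card2 : c1.support.card = 2 := by
              rw [heq, Equiv.Perm.card_support_swap (Ne.symm hc0b)]
            have hccard3 : cc.support.card = 3 := by
              have h3 : 0 < cc.support.card := Finset.card_pos.mpr ⟨a, hacc⟩
              omega
            constructor
            · rw [hc21, ecnt_one, ecnt_isCycle hccyc, hccard3]
              norm_num [Nat.even_iff]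
            · rw [hc21]; simp
          · have hc2cyc : c2.IsCycle := by
              have h := hc1cyc.swap_mul hc1bne (by rw [hc1b]; exact hc1c0)
              rw [hc1b, ← hc2def] at h
              exact h
            have hc2supp : c2.support = c1.support \ {b} := by
              have h := Equiv.Perm.support_swap_mul_eq c1 b (by rw [hc1b]; exact hc1c0)
              rw [hc1b, ← hc2def] at h
              exact h
            have hbc1 : b ∈ c1.support := by
              rw [hc1supp]
              exact Finset.mem_sdiff.2 ⟨hbcc, by simp [hba]⟩
            have hc2card : c2.support.card = c1.support.card - 1 := by
              rw [hc2supp, Finset.sdiff_singleton_eq_erase, Finset.card_erase_of_mem hbc1]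
            have hcc2 : 2 ≤ cc.support.card :=
              Equiv.Perm.two_le_card_support_of_ne_one hccyc.ne_one
            constructor
            · rw [ecnt_isCycle hc2cyc, ecnt_isCycle hccyc]
              have hpar : Even (c2.support.card) ↔ Even (cc.support.card) := by
                rw [Nat.even_iff, Nat.even_iff]
                omega
              by_cases hev : Even cc.support.card
              · rw [if_pos (hpar.2 hev), if_pos hev]
              · rw [if_neg (fun h => hev (hpar.1 h)), if_neg hev]
            · rw [hc2supp, hc1supp]
              intro z hz
              exact (Finset.mem_sdiff.1 (Finset.mem_sdiff.1 hz).1).1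
        obtain ⟨hec2, hc2sub⟩ := hecntc2
        have hdisj2 : Equiv.Perm.Disjoint r c2 := by
          intro z
          by_cases hz : z ∈ cc.support
          · left; exact hfixr z hz
          · right
            have hz2 : z ∉ c2.support := fun hmem' => hz (hc2sub hmem')
            exact Equiv.Perm.notMem_support.1 hz2
        have hecσ : ecnt σ = ecnt σ' := by
          conv_lhs => rw [hσdec]
          rw [hσ'dec, ecnt_disjoint_mul hdisjr, ecnt_disjoint_mul hdisj2, hec2]
        -- τ' analysis
        have hσinvc0 : σ⁻¹ c0 = b := by
          rw [Equiv.Perm.inv_eq_iff_eq]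
        have hτ'eq : σ'⁻¹ * γ' = Equiv.swap (σ⁻¹ a) b *
            (Equiv.swap (σ⁻¹ a) (σ⁻¹ u) * (σ⁻¹ * γ)) := by
          rw [hσ'def, hσ1def, hγ'def, hγ₁def, mul_inv_rev, mul_inv_rev, Equiv.swap_inv,
            Equiv.swap_inv, mul_assoc, mul_assoc]
          rw [conj_form (Equiv.swap a b) b c0]
          rw [conj_form (Equiv.swap a b) b u]
          rw [Equiv.swap_apply_right]
          rw [Equiv.swap_apply_of_ne_of_ne hc0a hc0b]
          rw [Equiv.swap_apply_of_ne_of_ne hua hub]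
          rw [Equiv.swap_mul_self_mul]
          rw [conj_form σ⁻¹ a c0]
          rw [conj_form σ⁻¹ a u]
          rw [hσinvc0]
        have hτ'le : len (σ'⁻¹ * γ') ≤ len (σ⁻¹ * γ) := by
          by_cases hwb : σ⁻¹ u = b
          · have hτ'eq2 : σ'⁻¹ * γ' = σ⁻¹ * γ := by
              rw [hτ'eq, hwb, Equiv.swap_mul_self_mul]
            rw [hτ'eq2]
          · have hval : (σ⁻¹ * γ) b = σ⁻¹ u := by
              simp only [Equiv.Perm.mul_apply, hudef]
            have hτbne : (σ⁻¹ * γ) b ≠ b := by rw [hval]; exact hwb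
            have hd0w : σ⁻¹ a ≠ σ⁻¹ u := fun h => hua ((σ⁻¹).injective h).symm
            have hd0b : σ⁻¹ a ≠ b := by
              intro h
              have h2 : a = σ b := Equiv.Perm.inv_eq_iff_eq.1 h
              exact hσba h2.symm
            have hid : Equiv.swap (σ⁻¹ a) b * Equiv.swap (σ⁻¹ a) (σ⁻¹ u) =
                Equiv.swap (σ⁻¹ a) (σ⁻¹ u) * Equiv.swap b (σ⁻¹ u) := by
              have h1 := swap_conj (Equiv.swap (σ⁻¹ a) (σ⁻¹ u)) b (σ⁻¹ u)
              rw [Equiv.swap_inv, Equiv.swap_apply_of_ne_of_ne (Ne.symm hd0b) (Ne.symm hwb),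
                Equiv.swap_apply_right] at h1
              have h2 : Equiv.swap (σ⁻¹ a) (σ⁻¹ u) * Equiv.swap b (σ⁻¹ u) =
                  Equiv.swap b (σ⁻¹ a) * Equiv.swap (σ⁻¹ a) (σ⁻¹ u) := by
                rw [← h1, mul_assoc, Equiv.swap_mul_self, mul_one]
              rw [h2, Equiv.swap_comm b (σ⁻¹ a)]
            have hτ'eq2 : σ'⁻¹ * γ' = Equiv.swap (σ⁻¹ a) (σ⁻¹ u) *
                (Equiv.swap b ((σ⁻¹ * γ) b) * (σ⁻¹ * γ)) := by
              rw [hτ'eq, ← mul_assoc, hid, mul_assoc, hval]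
            have hlD : len (Equiv.swap b ((σ⁻¹ * γ) b) * (σ⁻¹ * γ)) + 1 = len (σ⁻¹ * γ) :=
              len_del hτbne
            have hE := len_swap_mul_le (x := σ⁻¹ a) (y := σ⁻¹ u) hd0w
              (Equiv.swap b ((σ⁻¹ * γ) b) * (σ⁻¹ * γ))
            rw [hτ'eq2]
            omega
        have htri : len γ' ≤ len σ' + len (σ'⁻¹ * γ') := by
          have h1 := len_mul_le σ' (σ'⁻¹ * γ')
          rw [mul_inv_cancel_left] at h1
          exact h1
        have hgeo' : len σ' + len (σ'⁻¹ * γ') + 1 = S.card - 2 := by omega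
        -- ρ' analysis
        set r0 := σ u with hr0def
        have hr0b : r0 ≠ b := by
          rw [hr0def]
          exact fun h => hua (σ.injective (h.trans hσa.symm))
        have hr0c0 : r0 ≠ c0 := by
          rw [hr0def, hc0def]
          exact fun h => hub (σ.injective h)
        have hρbval : (σ * γ) b = r0 := by
          simp only [Equiv.Perm.mul_apply, hudef, hr0def]
        have hρa : (σ * γ) a = c0 := by
          simp only [Equiv.Perm.mul_apply, hc0def, hbdef]
        have hρane : (σ * γ) a ≠ a := by rw [hρa]; exact hc0a
        have hρ1len : len (Equiv.swap a c0 * (σ * γ)) + 1 = len (σ * γ) := by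
          have h := len_del hρane
          rwa [hρa] at h
        have hx1b : Equiv.swap a c0 r0 ≠ b := by
          by_cases h : r0 = a
          · rw [h, Equiv.swap_apply_left]; exact hc0b
          · rw [Equiv.swap_apply_of_ne_of_ne h hr0c0]; exact hr0b
        have hρ'eq : σ' * γ' = Equiv.swap b (Equiv.swap a c0 r0) *
            (Equiv.swap a c0 * (σ * γ)) := by
          rw [hσ'def, hσ1def, hγ'def, hγ₁def, mul_assoc, mul_assoc]
          rw [conj_form σ b u]
          rw [conj_form σ a b]
          rw [hσa, ← hc0def, ← hr0def]
          exact swap_word_aux hba hc0a hc0b hr0b hr0c0 (σ * γ)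
        have hρ'len : len (σ' * γ') + 2 = len (σ * γ) := by
          have hval3 : (Equiv.swap a c0 * (σ * γ)) b = Equiv.swap a c0 r0 := by
            simp only [Equiv.Perm.mul_apply, hρbval]
          have hbne : (Equiv.swap a c0 * (σ * γ)) b ≠ b := by rw [hval3]; exact hx1b
          have h := len_del hbne
          rw [hval3] at h
          rw [hρ'eq]
          omega
        have hIH := IH (n - 2) (by omega) ((S.erase a).erase b) γ' σ' (by omega)
          hγ'hyp hσ'supp (by omega)
        omega

end NCAux


theorem one_add_evenOrbits_eq_numOrbits_mul
    (p : ℕ) (hp : 1 ≤ p) (γ σ : Equiv.Perm (Fin p))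
    (hγ : numOrbits γ = 1) (hσ : IsGeodesic γ σ) :
    1 + numEvenOrbits σ = numOrbits (σ * γ) := by
  classical
  have hcard : (Finset.univ : Finset (Fin p)).card = p := by simp
  have key : ∀ π : Equiv.Perm (Fin p),
      NCAux.len π + Multiset.card π.cycleType = π.support.card := NCAux.len_add_card
  have key2 : ∀ π : Equiv.Perm (Fin p),
      2 * Multiset.card π.cycleType ≤ π.support.card := NCAux.two_mul_card_cycleType_le
  have hsupp_le : ∀ π : Equiv.Perm (Fin p), π.support.card ≤ p := by
    intro π
    simpa using Finset.card_le_univ π.support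
  have hnum : ∀ π : Equiv.Perm (Fin p), numOrbits π = p - NCAux.len π := by
    intro π
    have h1 := key π
    have h2 := key2 π
    have h3 := hsupp_le π
    have h4 : π.cycleType.sum = π.support.card := Equiv.Perm.sum_cycleType π
    unfold numOrbits
    omega
  have hplen : ∀ π : Equiv.Perm (Fin p), permLength π = NCAux.len π := by
    intro π
    have h1 := key π
    have h2 := key2 π
    have h3 := hsupp_le π
    have h4 : π.cycleType.sum = π.support.card := Equiv.Perm.sum_cycleType π
    unfold permLength numOrbits
    omega
  have hγhyp : (γ = 1 ∧ (Finset.univ : Finset (Fin p)).card ≤ 1) ∨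
      (γ.IsCycle ∧ γ.support = Finset.univ) := by
    have h1 := key γ
    have h2 := key2 γ
    have h3 := hsupp_le γ
    have h4 : γ.cycleType.sum = γ.support.card := Equiv.Perm.sum_cycleType γ
    unfold numOrbits at hγ
    by_cases hc : Multiset.card γ.cycleType = 0
    · left
      have hγ1 : γ = 1 := Equiv.Perm.card_cycleType_eq_zero.mp hc
      refine ⟨hγ1, ?_⟩
      have hct : γ.cycleType = 0 := Equiv.Perm.cycleType_eq_zero.mpr hγ1
      rw [hct] at hγ
      simp only [Multiset.sum_zero, Multiset.card_zero] at hγ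
      rw [hcard]
      omega
    · right
      have hc1 : Multiset.card γ.cycleType = 1 := by omega
      refine ⟨Equiv.Perm.card_cycleType_eq_one.mp hc1, ?_⟩
      have h5 : γ.support.card = p := by omega
      apply Finset.eq_univ_of_card
      rw [h5, Fintype.card_fin]
  have hgeo : NCAux.len σ + NCAux.len (σ⁻¹ * γ) + 1 = (Finset.univ : Finset (Fin p)).card := by
    unfold IsGeodesic at hσ
    rw [hplen σ, hplen (σ⁻¹ * γ)] at hσ
    rw [hcard]
    omega
  have hmain := NCAux.mainGL (Finset.univ : Finset (Fin p)).card Finset.univ γ σ rfl hγhyp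
    (Finset.subset_univ _) hgeo
  rw [hcard] at hmain
  have h1 := hnum (σ * γ)
  have h2 : numEvenOrbits σ = NCAux.ecnt σ := rfl
  omega
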